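/- Let {|ψ¹_j⟩}_{j=1,…,N} be linearly independent unit vectors in ℂ^D and {|ψ²_j⟩}_{j=1,…,N} unit vectors in ℂ^D, with Gram matrices Γ₁ and Γ₂. Suppose there exists an N×N matrix Π of rank at most one of the form Π_{j'j} = c̄_{j'} c_j (for some complex scalars c_j) which is positive semidefinite, has diagonal entries Π_{jj} = p_j, and is such that Γ₁ − Π∘Γ₂ is positive semidefinite. Then there exists a single linear operator A_S on ℂ^D with A_S†A_S ≤ 1 such that A_S|ψ¹_j⟩ = c_j|ψ²_j⟩ and ⟨ψ¹_j|A_S†A_S|ψ¹_j⟩ = |c_j|² = p_j for every j. -/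

import Mathlib

open Matrix BigOperators
open scoped ComplexOrder

/-- **Single-operator transformation, sufficiency.**  If the unit vectors
`ψ1 j` are linearly independent and there is a rank-at-most-one matrix `Π` of
the form `Π_{j'j} = conj (c j') * c j` which is positive semidefinite, has
diagonal `p`, and is such that `Γ₁ - Π ∘ Γ₂` is positive semidefinite, then
there is a single operator `A_S` with `A_S† A_S ≤ 1` realising the
transformation `ψ1 j ↦ c j • ψ2 j` with probabilities `p`. -/
theorem single_operator_sufficiency {D N : ℕ}
    (ψ1 ψ2 : Fin N → (Fin D → ℂ))
    (hψ1unit : ∀ j, star (ψ1 j) ⬝ᵥ ψ1 j = 1)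
    (hψ2unit : ∀ j, star (ψ2 j) ⬝ᵥ ψ2 j = 1)
    (hindep : LinearIndependent ℂ ψ1)
    (Γ1 Γ2 : Matrix (Fin N) (Fin N) ℂ)
    (hΓ1 : ∀ j' j, Γ1 j' j = star (ψ1 j') ⬝ᵥ ψ1 j)
    (hΓ2 : ∀ j' j, Γ2 j' j = star (ψ2 j') ⬝ᵥ ψ2 j)
    (c : Fin N → ℂ)
    (Pmat : Matrix (Fin N) (Fin N) ℂ)
    (hPform : ∀ j' j, Pmat j' j = star (c j') * c j)
    (hPrank : Matrix.rank Pmat ≤ 1)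
    (hPpos : Pmat.PosSemidef)
    (p : Fin N → ℝ)
    (hPdiag : ∀ j, Pmat j j = (p j : ℂ))
    (hG : (Γ1 - Matrix.hadamard Pmat Γ2).PosSemidef) :
    ∃ AS : Matrix (Fin D) (Fin D) ℂ,
      (1 - ASᴴ * AS).PosSemidef ∧
      (∀ j, AS *ᵥ ψ1 j = c j • ψ2 j) ∧
      (∀ j, star (ψ1 j) ⬝ᵥ ((ASᴴ * AS) *ᵥ ψ1 j) = (p j : ℂ)) ∧
      (∀ j, ‖c j‖ ^ 2 = p j) := by
  classical
  set B : Matrix (Fin D) (Fin N) ℂ := Matrix.of (fun i j => ψ1 j i) with hB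
  set C : Matrix (Fin D) (Fin N) ℂ := Matrix.of (fun i j => c j * ψ2 j i) with hC
  have hBtB : Bᴴ * B = Γ1 := by
    ext j' j
    simp [Matrix.mul_apply, hΓ1, dotProduct, Matrix.conjTranspose_apply, hB, mul_comm]
  have hCtC : Cᴴ * C = Matrix.hadamard Pmat Γ2 := by
    ext j' j
    simp only [Matrix.mul_apply, Matrix.conjTranspose_apply, hC, Matrix.of_apply,
      Matrix.hadamard_apply, hPform, hΓ2, dotProduct, Pi.star_apply, star_mul',
      Finset.mul_sum]
    refine Finset.sum_congr rfl fun i _ => by ring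
  have hBinj : Function.Injective B.mulVec := by
    rw [Matrix.mulVec_injective_iff]
    convert hindep using 1
    · rfl
    · rfl
  have hΓ1pd : Γ1.PosDef := by
    refine Matrix.PosDef.of_dotProduct_mulVec_pos (by rw [← hBtB]; exact (Matrix.posSemidef_conjTranspose_mul_self B).1) fun x hx => ?_
    have h1 : star x ⬝ᵥ (Γ1 *ᵥ x) = star (B *ᵥ x) ⬝ᵥ (B *ᵥ x) := by
      rw [← hBtB, ← Matrix.mulVec_mulVec, Matrix.dotProduct_mulVec, ← Matrix.star_mulVec]
    rw [h1]
    exact Matrix.dotProduct_star_self_pos_iff.2 (fun h => hx (hBinj (by simpa using h)))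
  have hdet : IsUnit Γ1.det := (Matrix.isUnit_iff_isUnit_det _).1 hΓ1pd.isUnit
  have hinv : Γ1⁻¹ * Γ1 = 1 := Matrix.nonsing_inv_mul _ hdet
  have hinv' : Γ1 * Γ1⁻¹ = 1 := Matrix.mul_nonsing_inv _ hdet
  have hΓ1h : Γ1ᴴ = Γ1 := by rw [← hBtB]; exact (Matrix.posSemidef_conjTranspose_mul_self B).1
  have hΓ1ih : (Γ1⁻¹)ᴴ = Γ1⁻¹ := by rw [Matrix.conjTranspose_nonsing_inv, hΓ1h]
  have hcol : ∀ j, B *ᵥ Pi.single j 1 = ψ1 j := by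
    intro j; ext i; simp [Matrix.mulVec_single, hB]
  have hASB : C * Γ1⁻¹ * Bᴴ * B = C := by
    rw [Matrix.mul_assoc (C * Γ1⁻¹), hBtB, Matrix.mul_assoc, hinv, Matrix.mul_one]
  have haction : ∀ j, (C * Γ1⁻¹ * Bᴴ) *ᵥ ψ1 j = c j • ψ2 j := by
    intro j
    rw [← hcol j, Matrix.mulVec_mulVec, hASB]
    ext i
    simp [Matrix.mulVec_single, hC]
  refine ⟨C * Γ1⁻¹ * Bᴴ, ?_, haction, ?_, ?_⟩
  · -- PSD
    have hXH : (B * Γ1⁻¹)ᴴ = Γ1⁻¹ * Bᴴ := by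
      rw [Matrix.conjTranspose_mul, hΓ1ih]
    have hmid : (B * Γ1⁻¹) * Γ1 = B := by rw [Matrix.mul_assoc, hinv, Matrix.mul_one]
    have e1 : (C * Γ1⁻¹ * Bᴴ)ᴴ * (C * Γ1⁻¹ * Bᴴ)
        = B * (Γ1⁻¹ * (Cᴴ * C * (Γ1⁻¹ * Bᴴ))) := by
      simp only [Matrix.conjTranspose_mul, hΓ1ih, Matrix.conjTranspose_conjTranspose,
        Matrix.mul_assoc]
    have expand : (B * Γ1⁻¹) * (Γ1 - Matrix.hadamard Pmat Γ2) * (B * Γ1⁻¹)ᴴ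
        = B * Γ1⁻¹ * Bᴴ - (C * Γ1⁻¹ * Bᴴ)ᴴ * (C * Γ1⁻¹ * Bᴴ) := by
      rw [Matrix.mul_sub, Matrix.sub_mul, hmid, hXH, ← hCtC, e1]
      simp only [Matrix.mul_assoc]
    have hproj : (1 - B * Γ1⁻¹ * Bᴴ).PosSemidef := by
      set Q := 1 - B * Γ1⁻¹ * Bᴴ with hQ
      have hQh : Qᴴ = Q := by
        simp [hQ, Matrix.conjTranspose_sub, Matrix.conjTranspose_mul, hΓ1ih,
          Matrix.conjTranspose_conjTranspose, Matrix.mul_assoc]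
      have h1 : Bᴴ * (B * (Γ1⁻¹ * Bᴴ)) = Bᴴ := by
        rw [← Matrix.mul_assoc Bᴴ B, hBtB, ← Matrix.mul_assoc, hinv', Matrix.one_mul]
      have hPP : B * Γ1⁻¹ * Bᴴ * (B * Γ1⁻¹ * Bᴴ) = B * Γ1⁻¹ * Bᴴ := by
        simp only [Matrix.mul_assoc, h1]
      have hQ2 : Q * Q = Q := by
        simp only [hQ, Matrix.sub_mul, Matrix.mul_sub, Matrix.one_mul, Matrix.mul_one, hPP]
        abel
      have : Q = Qᴴ * Q := by rw [hQh, hQ2]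
      rw [this]
      exact Matrix.posSemidef_conjTranspose_mul_self Q
    have h2 : ((B * Γ1⁻¹) * (Γ1 - Matrix.hadamard Pmat Γ2) * (B * Γ1⁻¹)ᴴ).PosSemidef :=
      hG.mul_mul_conjTranspose_same _
    have hsum : (1 : Matrix (Fin D) (Fin D) ℂ) - (C * Γ1⁻¹ * Bᴴ)ᴴ * (C * Γ1⁻¹ * Bᴴ)
        = (1 - B * Γ1⁻¹ * Bᴴ) + (B * Γ1⁻¹) * (Γ1 - Matrix.hadamard Pmat Γ2) * (B * Γ1⁻¹)ᴴ := by
      rw [expand]; abel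
    rw [hsum]
    exact hproj.add h2
  · -- probability
    intro j
    calc star (ψ1 j) ⬝ᵥ (((C * Γ1⁻¹ * Bᴴ)ᴴ * (C * Γ1⁻¹ * Bᴴ)) *ᵥ ψ1 j)
        = star ((C * Γ1⁻¹ * Bᴴ) *ᵥ ψ1 j) ⬝ᵥ ((C * Γ1⁻¹ * Bᴴ) *ᵥ ψ1 j) := by
          rw [← Matrix.mulVec_mulVec, Matrix.dotProduct_mulVec, ← Matrix.star_mulVec]
      _ = star (c j • ψ2 j) ⬝ᵥ (c j • ψ2 j) := by rw [haction j]
      _ = star (c j) * c j * (star (ψ2 j) ⬝ᵥ ψ2 j) := by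
          simp [star_smul, smul_dotProduct, dotProduct_smul, smul_eq_mul]
          ring
      _ = (p j : ℂ) := by rw [hψ2unit j, mul_one, ← hPform j j, hPdiag j]
  · intro j
    have h := (hPdiag j).symm.trans (hPform j j)
    rw [Complex.star_def, mul_comm, Complex.mul_conj] at h
    have h4 : p j = Complex.normSq (c j) := by exact_mod_cast h
    rw [h4, Complex.sq_norm]
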